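/- Let ρ, p, p_T : (0,∞) → [0,∞) be continuous functions with ρ compactly supported, not identically zero, and non-increasing, and suppose p_T(r) ≤ p(r) for all r > 0. Let m(r) = 4π ∫₀^r s² ρ(s) ds and assume 2m(r) < r for all r > 0. Define λ(r) = −(1/2)·log(1 − 2m(r)/r) and let μ ∈ C²((0,∞)) satisfy μ′(r) = e^{2λ(r)} ( m(r)/r² + 4π r p(r) ) and the field equation e^{−2λ}( μ″ + (μ′ + 1/r)(μ′ − λ′) ) = 8π p_T on (0,∞), with μ extending continuously to r = 0. Then sup_{r>0} 2m(r)/r < 8/9. -/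

import Mathlib

open Real MeasureTheory Filter Topology Set

set_option maxHeartbeats 4000000

/-- The Buchdahl inequality `sup_{r>0} 2m(r)/r < 8/9` for static, spherically symmetric
configurations with non-increasing energy density and `p_T ≤ p`. -/
theorem buchdahl_inequality
    (ρ p pT m lam μ μ' μ'' lam' : ℝ → ℝ)
    (hρ_cont : ContinuousOn ρ (Ioi 0))
    (hρ_nonneg : ∀ r > 0, 0 ≤ ρ r)
    (hρ_supp : ∃ R > 0, ∀ r ≥ R, ρ r = 0)
    (hρ_ne : ∃ r > 0, ρ r ≠ 0)
    (hρ_mono : AntitoneOn ρ (Ioi 0))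
    (hp_cont : ContinuousOn p (Ioi 0)) (hp_nonneg : ∀ r > 0, 0 ≤ p r)
    (hpT_cont : ContinuousOn pT (Ioi 0)) (hpT_nonneg : ∀ r > 0, 0 ≤ pT r)
    (hpT_le : ∀ r > 0, pT r ≤ p r)
    (hm : ∀ r, m r = 4 * π * ∫ s in (0:ℝ)..r, s ^ 2 * ρ s)
    (h2m : ∀ r > 0, 2 * m r < r)
    (hlam : ∀ r, lam r = -(1 / 2) * Real.log (1 - 2 * m r / r))
    (hμ' : ∀ r > 0, HasDerivAt μ (μ' r) r)
    (hμ'' : ∀ r > 0, HasDerivAt μ' (μ'' r) r)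
    (hμ''_cont : ContinuousOn μ'' (Ioi 0))
    (hlam' : ∀ r > 0, HasDerivAt lam (lam' r) r)
    (hfield1 : ∀ r > 0, μ' r = Real.exp (2 * lam r) * (m r / r ^ 2 + 4 * π * r * p r))
    (hfield2 : ∀ r > 0,
      Real.exp (-2 * lam r) * (μ'' r + (μ' r + 1 / r) * (μ' r - lam' r)) = 8 * π * pT r)
    (hμ0 : Tendsto μ (nhdsWithin 0 (Ioi 0)) (nhds (μ 0))) :
    sSup {x | ∃ r > 0, x = 2 * m r / r} < 8 / 9 := by
  obtain ⟨R, hR, hRsupp⟩ := hρ_supp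
  set g : ℝ → ℝ := fun s => s ^ 2 * ρ s with hg
  have hg_cont : ContinuousOn g (Ioi 0) :=
    (continuous_pow 2).continuousOn.mul hρ_cont
  by_cases hint : IntervalIntegrable g volume 0 1
  case neg =>
    -- pathological case: `m ≡ 0` on `(0,∞)` and the supremum is `0`
    have hm0 : ∀ r > 0, m r = 0 := by
      intro r hr
      have hni : ¬ IntervalIntegrable g volume 0 r := by
        intro h
        apply hint
        rcases le_total (1:ℝ) r with h1 | h1
        · exact h.mono_set (by
            rw [uIcc_of_le zero_le_one, uIcc_of_le hr.le]
            exact Icc_subset_Icc le_rfl h1)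
        · exact h.trans ((hg_cont.mono (by
            rw [uIcc_of_le h1]
            exact fun x hx => lt_of_lt_of_le hr hx.1)).intervalIntegrable)
      rw [hm r, intervalIntegral.integral_undef hni, mul_zero]
    have hset : {x | ∃ r > 0, x = 2 * m r / r} = {0} := by
      ext y
      simp only [mem_setOf_eq, mem_singleton_iff]
      constructor
      · rintro ⟨r, hr, rfl⟩
        rw [hm0 r hr]
        simp
      · rintro rfl
        exact ⟨1, one_pos, by rw [hm0 1 one_pos]; simp⟩
    rw [hset, csSup_singleton]
    norm_num
  case pos =>
  have hgint : ∀ r > 0, IntervalIntegrable g volume 0 r := by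
    intro r hr
    rcases le_total r 1 with h | h
    · exact hint.mono_set (by
        rw [uIcc_of_le hr.le, uIcc_of_le zero_le_one]
        exact Icc_subset_Icc le_rfl h)
    · exact hint.trans ((hg_cont.mono (by
        rw [uIcc_of_le h]
        exact fun x hx => lt_of_lt_of_le one_pos hx.1)).intervalIntegrable)
  have hm' : ∀ r > 0, HasDerivAt m (4 * π * (r ^ 2 * ρ r)) r := by
    intro r hr
    have hd : HasDerivAt (fun u => ∫ s in (0:ℝ)..u, g s) (g r) r :=
      intervalIntegral.integral_hasDerivAt_right (hgint r hr)
        (hg_cont.stronglyMeasurableAtFilter isOpen_Ioi r hr)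
        (hg_cont.continuousAt (isOpen_Ioi.mem_nhds hr))
    have := hd.const_mul (4 * π)
    simpa [funext hm] using this
  have hm_nonneg : ∀ r > 0, 0 ≤ m r := by
    intro r hr
    rw [hm r]
    have h0 : 0 ≤ ∫ s in (0:ℝ)..r, g s := by
      refine intervalIntegral.integral_nonneg hr.le ?_
      intro u hu
      rcases eq_or_lt_of_le hu.1 with h | h
      · simp [hg, ← h]
      · exact mul_nonneg (sq_nonneg u) (hρ_nonneg u h)
    positivity
  have hkey : ∀ r > 0, 4 * π * r ^ 3 * ρ r ≤ 3 * m r := by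
    intro r hr
    have hmono : (∫ s in (0:ℝ)..r, s ^ 2 * ρ r) ≤ ∫ s in (0:ℝ)..r, g s := by
      refine intervalIntegral.integral_mono_on hr.le ?_ (hgint r hr) ?_
      · exact (Continuous.intervalIntegrable (by continuity) 0 r)
      · intro x hx
        rcases eq_or_lt_of_le hx.1 with h | h
        · simp [hg, ← h]
        · exact mul_le_mul_of_nonneg_left (hρ_mono h (lt_of_lt_of_le h hx.2) hx.2) (sq_nonneg x)
    have hval : (∫ s in (0:ℝ)..r, s ^ 2 * ρ r) = r ^ 3 / 3 * ρ r := by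
      rw [intervalIntegral.integral_mul_const, integral_pow]
      ring
    rw [hm r]
    rw [hval] at hmono
    nlinarith [pi_pos, hmono]
  have hmc : AntitoneOn (fun r => m r / r ^ 3) (Ioi 0) := by
    refine antitoneOn_of_deriv_nonpos (convex_Ioi 0) ?_ ?_ ?_
    · intro x hx
      have hx0 : (0:ℝ) < x := hx
      exact ((hm' x hx).continuousAt.continuousWithinAt).div
        (continuousWithinAt_id.pow 3) (by positivity)
    · intro x hx
      rw [interior_Ioi] at hx
      have hx0 : (0:ℝ) < x := hx
      exact ((hm' x hx).differentiableAt.div (differentiableAt_pow 3)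
        (by positivity)).differentiableWithinAt
    · intro x hx
      rw [interior_Ioi] at hx
      have hx0 : (0:ℝ) < x := hx
      have hd : HasDerivAt (fun r => m r / r ^ 3)
          ((4 * π * (x ^ 2 * ρ x) * x ^ 3 - m x * (3 * x ^ 2)) / (x ^ 3) ^ 2) x := by
        have := (hm' x hx).div (hasDerivAt_pow 3 x) (by positivity : x ^ 3 ≠ 0)
        exact this.congr_deriv (by norm_num)
      rw [hd.deriv]
      have := hkey x hx
      have hx3 : (0:ℝ) < x ^ 3 := by positivity
      apply div_nonpos_of_nonpos_of_nonneg _ (sq_nonneg _)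
      nlinarith [this]
  have ht_pos : ∀ r > 0, 0 < 1 - 2 * m r / r := by
    intro r hr
    have := h2m r hr
    rw [sub_pos, div_lt_one hr]
    linarith
  have hE2 : ∀ r > 0, Real.exp (2 * lam r) = (1 - 2 * m r / r)⁻¹ := by
    intro r hr
    rw [hlam r]
    rw [show (2:ℝ) * (-(1 / 2) * Real.log (1 - 2 * m r / r)) = -Real.log (1 - 2 * m r / r) by ring]
    rw [Real.exp_neg, Real.exp_log (ht_pos r hr)]
  have hlam'_eq : ∀ r > 0, lam' r = Real.exp (2 * lam r) * (4 * π * r * ρ r - m r / r ^ 2) := by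
    intro r hr
    have hrne : r ≠ 0 := ne_of_gt hr
    have hbne : r - 2 * m r ≠ 0 := by intro h; linarith [h2m r hr]
    have ht : HasDerivAt (fun x => 1 - 2 * m x / x)
        (-((2 * (4 * π * (r ^ 2 * ρ r)) * r - 2 * m r * 1) / r ^ 2)) r := by
      have := (((hm' r hr).const_mul 2).div (hasDerivAt_id r) hrne)
      exact ((hasDerivAt_const r (1:ℝ)).sub this).congr_deriv (by simp)
    have hlog : HasDerivAt (fun x => -(1/2) * Real.log (1 - 2 * m x / x))
        (-(1/2) * (-((2 * (4 * π * (r ^ 2 * ρ r)) * r - 2 * m r * 1) / r ^ 2) / (1 - 2 * m r / r))) r :=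
      (ht.log (ne_of_gt (ht_pos r hr))).const_mul _
    have hlamf : HasDerivAt lam
        (-(1/2) * (-((2 * (4 * π * (r ^ 2 * ρ r)) * r - 2 * m r * 1) / r ^ 2) / (1 - 2 * m r / r))) r := by
      simpa [funext hlam] using hlog
    have heq := (hlam' r hr).unique hlamf
    rw [heq, hE2 r hr]
    have h1 : (1 - 2 * m r / r) = (r - 2 * m r) / r := by field_simp
    rw [h1]
    field_simp
  -- the Buchdahl function and its derivative
  set f : ℝ → ℝ := fun r => Real.exp (-lam r) * (μ' r * Real.exp (μ r)) / r with hfdef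
  have hfD : ∀ r > 0, HasDerivAt f (deriv f r) r := by
    intro r hr
    have h1 := ((hlam' r hr).neg).exp
    have h2 := (hμ'' r hr).mul ((hμ' r hr).exp)
    exact ((h1.mul h2).div (hasDerivAt_id r) (ne_of_gt hr)).differentiableAt.hasDerivAt
  have hfderiv_eq : ∀ r > 0, deriv f r = (Real.exp (-lam r) * Real.exp (μ r) / r) *
      (8 * π * pT r * Real.exp (2 * lam r) + lam' r / r - 2 * μ' r / r) := by
    intro r hr
    have hrne : r ≠ 0 := ne_of_gt hr
    have h1 := ((hlam' r hr).neg).exp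
    have h2 := (hμ'' r hr).mul ((hμ' r hr).exp)
    have hD := (h1.mul h2).div (hasDerivAt_id r) (ne_of_gt hr)
    have hD2 : HasDerivAt f (((Real.exp (-lam r) * -lam' r * (μ' r * Real.exp (μ r)) +
            Real.exp (-lam r) * (μ'' r * Real.exp (μ r) + μ' r * (Real.exp (μ r) * μ' r))) * r -
        Real.exp (-lam r) * (μ' r * Real.exp (μ r)) * 1) / r ^ 2) r := hD
    rw [hD2.deriv]
    have hprod : Real.exp (2 * lam r) * Real.exp (-2 * lam r) = 1 := by
      rw [← Real.exp_add]; simp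
    have hμ''_eq2 : μ'' r = 8 * π * pT r * Real.exp (2 * lam r)
        - (μ' r + 1 / r) * (μ' r - lam' r) := by
      have h := hfield2 r hr
      linear_combination Real.exp (2 * lam r) * h
        - (μ'' r + (μ' r + 1 / r) * (μ' r - lam' r)) * hprod
    rw [hμ''_eq2]
    field_simp
    ring
  have hf'_nonpos : ∀ r > 0, deriv f r ≤ 0 := by
    intro r hr
    have hrne : r ≠ 0 := ne_of_gt hr
    rw [hfderiv_eq r hr]
    have hbr : 8 * π * pT r * Real.exp (2 * lam r) + lam' r / r - 2 * μ' r / r ≤ 0 := by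
      rw [hlam'_eq r hr, hfield1 r hr]
      have hE2pos : 0 < Real.exp (2 * lam r) := Real.exp_pos _
      have h3 : 8 * π * pT r * Real.exp (2 * lam r)
          + Real.exp (2 * lam r) * (4 * π * r * ρ r - m r / r ^ 2) / r
          - 2 * (Real.exp (2 * lam r) * (m r / r ^ 2 + 4 * π * r * p r)) / r
          = Real.exp (2 * lam r) * (8 * π * (pT r - p r) + (4 * π * r ^ 3 * ρ r - 3 * m r) / r ^ 3) := by
        field_simp
        ring
      rw [h3]
      apply mul_nonpos_of_nonneg_of_nonpos hE2pos.le
      have h4 := hpT_le r hr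
      have h6 : (4 * π * r ^ 3 * ρ r - 3 * m r) / r ^ 3 ≤ 0 :=
        div_nonpos_of_nonpos_of_nonneg (by linarith [hkey r hr]) (by positivity)
      nlinarith [pi_pos]
    have hpos : 0 ≤ Real.exp (-lam r) * Real.exp (μ r) / r := by positivity
    exact mul_nonpos_of_nonneg_of_nonpos hpos hbr
  have hf_anti : AntitoneOn f (Ioi 0) := by
    refine antitoneOn_of_deriv_nonpos (convex_Ioi 0) ?_ ?_ ?_
    · intro x hx
      exact (hfD x hx).continuousAt.continuousWithinAt
    · intro x hx
      rw [interior_Ioi] at hx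
      exact (hfD x hx).differentiableAt.differentiableWithinAt
    · intro x hx
      rw [interior_Ioi] at hx
      exact hf'_nonpos x hx
  -- pointwise Buchdahl estimate
  have hμ'_nonneg : ∀ s > 0, 0 ≤ μ' s := by
    intro s hs
    rw [hfield1 s hs]
    have h1 := hm_nonneg s hs
    have h2 := hp_nonneg s hs
    have := Real.exp_pos (2 * lam s)
    positivity
  have hexplam : ∀ s > 0, Real.exp (-lam s) = Real.sqrt (1 - 2 * m s / s) := by
    intro s hs
    rw [hlam s, Real.sqrt_eq_rpow, Real.rpow_def_of_pos (ht_pos s hs)]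
    ring_nf
  have hμ'cont : ContinuousOn (fun s => Real.exp (μ s) * μ' s) (Ioi 0) := by
    intro s hs
    exact (((hμ' s hs).exp.continuousAt).mul (hμ'' s hs).continuousAt).continuousWithinAt
  have hpb : ∀ r > 0, 0 < m r →
      2 * Real.sqrt (1 - 2 * m r / r) * Real.exp (μ 0)
        ≤ Real.exp (μ r) * (3 * Real.sqrt (1 - 2 * m r / r) - 1) := by
    intro r hr hmr
    set t : ℝ := 1 - 2 * m r / r with htdef
    set x : ℝ := Real.sqrt t with hxdef
    set k : ℝ := 2 * m r / r ^ 3 with hkdef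
    have htpos : 0 < t := ht_pos r hr
    have hxpos : 0 < x := Real.sqrt_pos.2 htpos
    have hx1 : x ≤ 1 := by
      have h1 : t ≤ 1 := by
        rw [htdef]
        have h2 := hm_nonneg r hr
        have h3 : 0 ≤ 2 * m r / r := by positivity
        linarith
      rw [hxdef, show (1:ℝ) = Real.sqrt 1 by simp]
      exact Real.sqrt_le_sqrt h1
    have hkpos : 0 < k := by rw [hkdef]; positivity
    have hkr2 : k * r ^ 2 = 2 * m r / r := by rw [hkdef]; field_simp
    have hq_pos : ∀ s, 0 < s → s ≤ r → 0 < 1 - k * s ^ 2 := by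
      intro s hs hsr
      have hcube := hmc (mem_Ioi.2 hs) (mem_Ioi.2 hr) hsr
      have h2ms : k * s ^ 2 ≤ 2 * m s / s := by
        have : k * s ^ 2 = 2 * s ^ 2 * (m r / r ^ 3) := by rw [hkdef]; ring
        rw [this, show 2 * m s / s = 2 * s ^ 2 * (m s / s ^ 3) by field_simp]
        nlinarith [hcube, sq_nonneg s, hs]
      have := ht_pos s hs
      linarith
    have hcomp : ∀ s, 0 < s → s ≤ r → Real.exp (-lam s) ≤ Real.sqrt (1 - k * s ^ 2) := by
      intro s hs hsr
      rw [hexplam s hs]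
      apply Real.sqrt_le_sqrt
      have hcube := hmc (mem_Ioi.2 hs) (mem_Ioi.2 hr) hsr
      have : k * s ^ 2 ≤ 2 * m s / s := by
        have h1 : k * s ^ 2 = 2 * s ^ 2 * (m r / r ^ 3) := by rw [hkdef]; ring
        rw [h1, show 2 * m s / s = 2 * s ^ 2 * (m s / s ^ 3) by field_simp]
        nlinarith [hcube, sq_nonneg s, hs]
      linarith
    have hfr_nonneg : 0 ≤ f r := by
      rw [hfdef]
      have h1 := hμ'_nonneg r hr
      have h2 := Real.exp_pos (-lam r)
      have h3 := Real.exp_pos (μ r)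
      positivity
    have hmain : ∀ ε, 0 < ε → ε < r →
        f r * (k⁻¹ * (Real.sqrt (1 - k * ε ^ 2) - Real.sqrt (1 - k * r ^ 2)))
          ≤ Real.exp (μ r) - Real.exp (μ ε) := by
      intro ε hε hεr
      have hsub : uIcc ε r ⊆ Ioi 0 := by
        rw [uIcc_of_le hεr.le]
        exact fun y hy => lt_of_lt_of_le hε hy.1
      have hζFTC : ∫ s in ε..r, Real.exp (μ s) * μ' s = Real.exp (μ r) - Real.exp (μ ε) := by
        apply intervalIntegral.integral_eq_sub_of_hasDerivAt
        · intro s hs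
          exact (hμ' s (hsub hs)).exp
        · exact (hμ'cont.mono hsub).intervalIntegrable
      have hGFTC : ∫ s in ε..r, s * (Real.sqrt (1 - k * s ^ 2))⁻¹
          = k⁻¹ * (Real.sqrt (1 - k * ε ^ 2) - Real.sqrt (1 - k * r ^ 2)) := by
        have hder : ∀ s ∈ uIcc ε r,
            HasDerivAt (fun y => -(k⁻¹ * Real.sqrt (1 - k * y ^ 2)))
              (s * (Real.sqrt (1 - k * s ^ 2))⁻¹) s := by
          intro s hs
          have hs0 : 0 < s := hsub hs
          have hsr : s ≤ r := by
            rcases mem_uIcc.1 hs with h | h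
            · exact h.2
            · linarith [h.1, h.2, hεr]
          have hqs := hq_pos s hs0 hsr
          have hinner : HasDerivAt (fun y => 1 - k * y ^ 2) (-(k * (2 * s))) s := by
            simpa using ((hasDerivAt_pow 2 s).const_mul k).const_sub 1
          have hsqrt := hinner.sqrt (ne_of_gt hqs)
          have := (hsqrt.const_mul k⁻¹).neg
          refine this.congr_deriv ?_
          have hsq : Real.sqrt (1 - k * s ^ 2) > 0 := Real.sqrt_pos.2 hqs
          have hkne : k ≠ 0 := ne_of_gt hkpos
          field_simp
        rw [intervalIntegral.integral_eq_sub_of_hasDerivAt hder ?_]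
        · ring
        · apply ContinuousOn.intervalIntegrable
          intro s hs
          have hs0 : 0 < s := hsub hs
          have hsr : s ≤ r := by
            rcases mem_uIcc.1 hs with h | h
            · exact h.2
            · linarith [h.1, h.2, hεr]
          have hqs := hq_pos s hs0 hsr
          have hsq : Real.sqrt (1 - k * s ^ 2) ≠ 0 := ne_of_gt (Real.sqrt_pos.2 hqs)
          have hcontq : ContinuousWithinAt (fun y => Real.sqrt (1 - k * y ^ 2)) (uIcc ε r) s :=
            ((continuous_const.sub (continuous_const.mul (continuous_pow 2))).sqrt).continuousWithinAt
          exact continuousWithinAt_id.mul (hcontq.inv₀ hsq)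
      have hmono : ∫ s in ε..r, f r * (s * (Real.sqrt (1 - k * s ^ 2))⁻¹)
          ≤ ∫ s in ε..r, Real.exp (μ s) * μ' s := by
        apply intervalIntegral.integral_mono_on hεr.le
        · apply ContinuousOn.intervalIntegrable
          intro s hs
          have hs0 : 0 < s := hsub hs
          have hsr : s ≤ r := by
            rcases mem_uIcc.1 hs with h | h
            · exact h.2
            · linarith [h.1, h.2, hεr]
          have hqs := hq_pos s hs0 hsr
          have hsq : Real.sqrt (1 - k * s ^ 2) ≠ 0 := ne_of_gt (Real.sqrt_pos.2 hqs)
          have hcontq : ContinuousWithinAt (fun y => Real.sqrt (1 - k * y ^ 2)) (uIcc ε r) s :=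
            ((continuous_const.sub (continuous_const.mul (continuous_pow 2))).sqrt).continuousWithinAt
          exact continuousWithinAt_const.mul (continuousWithinAt_id.mul (hcontq.inv₀ hsq))
        · exact (hμ'cont.mono (by rw [uIcc_of_le hεr.le] at hsub ⊢; exact hsub)).intervalIntegrable
        · intro s hs
          have hs0 : 0 < s := lt_of_lt_of_le hε hs.1
          have hsr : s ≤ r := hs.2
          have hqs := hq_pos s hs0 hsr
          have hsq : 0 < Real.sqrt (1 - k * s ^ 2) := Real.sqrt_pos.2 hqs
          have hfs : f r ≤ f s := hf_anti (mem_Ioi.2 hs0) (mem_Ioi.2 (lt_of_lt_of_le hs0 hsr)) hsr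
          have hfs_val : f s = Real.exp (-lam s) * (μ' s * Real.exp (μ s)) / s := by rw [hfdef]
          have step1 : f r * s ≤ Real.exp (-lam s) * (μ' s * Real.exp (μ s)) := by
            have := mul_le_mul_of_nonneg_right hfs hs0.le
            rw [hfs_val] at this
            calc f r * s ≤ Real.exp (-lam s) * (μ' s * Real.exp (μ s)) / s * s := this
              _ = Real.exp (-lam s) * (μ' s * Real.exp (μ s)) := by field_simp
          have step2 : Real.exp (-lam s) * (μ' s * Real.exp (μ s))
              ≤ Real.sqrt (1 - k * s ^ 2) * (μ' s * Real.exp (μ s)) := by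
            apply mul_le_mul_of_nonneg_right (hcomp s hs0 hsr)
            have := hμ'_nonneg s hs0
            positivity
          calc f r * (s * (Real.sqrt (1 - k * s ^ 2))⁻¹)
              = (f r * s) * (Real.sqrt (1 - k * s ^ 2))⁻¹ := by ring
            _ ≤ (Real.sqrt (1 - k * s ^ 2) * (μ' s * Real.exp (μ s))) * (Real.sqrt (1 - k * s ^ 2))⁻¹ :=
                mul_le_mul_of_nonneg_right (step1.trans step2) (inv_nonneg.2 hsq.le)
            _ = Real.exp (μ s) * μ' s := by field_simp
      rw [← hGFTC, ← hζFTC, ← intervalIntegral.integral_const_mul]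
      exact hmono
    have hlim1 : Tendsto (fun ε => f r * (k⁻¹ * (Real.sqrt (1 - k * ε ^ 2) - Real.sqrt (1 - k * r ^ 2))))
        (𝓝[>] (0:ℝ)) (𝓝 (f r * (k⁻¹ * (1 - Real.sqrt (1 - k * r ^ 2))))) := by
      have hc : Continuous fun ε : ℝ =>
          f r * (k⁻¹ * (Real.sqrt (1 - k * ε ^ 2) - Real.sqrt (1 - k * r ^ 2))) := by
        apply continuous_const.mul
        apply continuous_const.mul
        apply Continuous.sub _ continuous_const
        exact (continuous_const.sub (continuous_const.mul (continuous_pow 2))).sqrt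
      have := hc.tendsto 0
      simp only [ne_eq, OfNat.ofNat_ne_zero, not_false_eq_true, zero_pow, mul_zero, sub_zero,
        Real.sqrt_one] at this
      exact this.mono_left nhdsWithin_le_nhds
    have hlim2 : Tendsto (fun ε => Real.exp (μ r) - Real.exp (μ ε)) (𝓝[>] (0:ℝ))
        (𝓝 (Real.exp (μ r) - Real.exp (μ 0))) :=
      tendsto_const_nhds.sub ((Real.continuous_exp.tendsto _).comp hμ0)
    have hev : (fun ε => f r * (k⁻¹ * (Real.sqrt (1 - k * ε ^ 2) - Real.sqrt (1 - k * r ^ 2))))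
        ≤ᶠ[𝓝[>] (0:ℝ)] (fun ε => Real.exp (μ r) - Real.exp (μ ε)) := by
      filter_upwards [Ioo_mem_nhdsGT_of_mem (Set.mem_Ico.2 ⟨le_refl 0, hr⟩)] with ε hε
      exact hmain ε hε.1 hε.2
    have C1 : f r * (k⁻¹ * (1 - Real.sqrt (1 - k * r ^ 2))) ≤ Real.exp (μ r) - Real.exp (μ 0) :=
      le_of_tendsto_of_tendsto hlim1 hlim2 hev
    have hxr : Real.sqrt (1 - k * r ^ 2) = x := by rw [hxdef, htdef, hkr2]
    rw [hxr] at C1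
    have ht_eq : t = x ^ 2 := (Real.sq_sqrt htpos.le).symm
    have hfr_lb : Real.exp (μ r) * k / (2 * x) ≤ f r := by
      rw [hfdef]
      simp only
      rw [hexplam r hr]
      have hμ'_lb : t⁻¹ * (m r / r ^ 2) ≤ μ' r := by
        rw [hfield1 r hr, hE2 r hr]
        have h0 := hp_nonneg r hr
        have h2 : (0:ℝ) ≤ t⁻¹ := by positivity
        nlinarith [mul_nonneg h2 (by positivity : (0:ℝ) ≤ 4 * π * r * p r)]
      have hζ := Real.exp_pos (μ r)
      have heq : Real.exp (μ r) * k / (2 * x)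
          = Real.sqrt (1 - 2 * m r / r) * (t⁻¹ * (m r / r ^ 2) * Real.exp (μ r)) / r := by
        rw [show Real.sqrt (1 - 2 * m r / r) = x from rfl, ht_eq, hkdef]
        have hxne : x ≠ 0 := ne_of_gt hxpos
        have hrne : r ≠ 0 := ne_of_gt hr
        field_simp
      rw [heq]
      gcongr
    have hk1x : 0 ≤ k⁻¹ * (1 - x) := by
      apply mul_nonneg (by positivity)
      linarith
    have C2 : Real.exp (μ r) * k / (2 * x) * (k⁻¹ * (1 - x)) ≤ Real.exp (μ r) - Real.exp (μ 0) :=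
      le_trans (mul_le_mul_of_nonneg_right hfr_lb hk1x) C1
    have hC2' : Real.exp (μ r) * (1 - x) / (2 * x) ≤ Real.exp (μ r) - Real.exp (μ 0) := by
      have heq2 : Real.exp (μ r) * k / (2 * x) * (k⁻¹ * (1 - x))
          = Real.exp (μ r) * (1 - x) / (2 * x) := by
        have hkne : k ≠ 0 := ne_of_gt hkpos
        have hxne : x ≠ 0 := ne_of_gt hxpos
        field_simp
      rw [heq2] at C2
      exact C2
    have h2x : (0:ℝ) < 2 * x := by linarith
    rw [div_le_iff₀ h2x] at hC2'
    nlinarith [hC2']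
  -- m is constant beyond R
  have hmconst : ∀ r ≥ R, m r = m R := by
    intro r hrR
    have hr0 : 0 < r := lt_of_lt_of_le hR hrR
    have hint2 : IntervalIntegrable g volume R r :=
      (hg_cont.mono (by
        rw [uIcc_of_le hrR]
        exact fun y hy => lt_of_lt_of_le hR hy.1)).intervalIntegrable
    have h1 : (∫ s in (0:ℝ)..R, g s) + ∫ s in R..r, g s = ∫ s in (0:ℝ)..r, g s :=
      intervalIntegral.integral_add_adjacent_intervals (hgint R hR) hint2
    have h2 : ∫ s in R..r, g s = 0 := by
      rw [intervalIntegral.integral_congr (g := fun _ => (0:ℝ))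
        (fun y hy => by
          rw [uIcc_of_le hrR] at hy
          simp [hg, hRsupp y hy.1]),
        intervalIntegral.integral_zero]
    rw [hm r, hm R, ← h1, h2]
    ring
  -- ζ is monotone
  have hζmono : MonotoneOn (fun s => Real.exp (μ s)) (Ioi 0) := by
    refine monotoneOn_of_deriv_nonneg (convex_Ioi 0) ?_ ?_ ?_
    · intro s hs
      exact ((hμ' s hs).exp).continuousAt.continuousWithinAt
    · intro s hs
      rw [interior_Ioi] at hs
      exact ((hμ' s hs).exp).differentiableAt.differentiableWithinAt
    · intro s hs
      rw [interior_Ioi] at hs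
      rw [((hμ' s hs).exp).deriv]
      have := hμ'_nonneg s hs
      positivity
  -- final assembly
  set r₁ : ℝ := max R (3 * m R) with hr₁def
  have hr₁pos : 0 < r₁ := lt_of_lt_of_le hR (le_max_left _ _)
  set c : ℝ := Real.exp (μ 0) with hcdef
  set Z : ℝ := Real.exp (μ r₁) with hZdef
  have hcpos : 0 < c := Real.exp_pos _
  have hZpos : 0 < Z := Real.exp_pos _
  set δ : ℝ := 2 * c / (9 * Z) with hδdef
  have hδpos : 0 < δ := by rw [hδdef]; positivity
  have hδZ : 9 * Z * δ = 2 * c := by rw [hδdef]; field_simp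
  have hub : ∀ y ∈ {x | ∃ r > 0, x = 2 * m r / r},
      y ≤ max (2/3 : ℝ) (1 - (1/3 + δ) ^ 2) := by
    rintro y ⟨r, hr, rfl⟩
    rcases le_or_gt r₁ r with hcase | hcase
    · -- large r : use m r = m R and r ≥ 3 m R
      have hrR : R ≤ r := le_trans (le_max_left _ _) hcase
      have h3m : 3 * m R ≤ r := le_trans (le_max_right _ _) hcase
      have : 2 * m r / r ≤ 2/3 := by
        rw [hmconst r hrR, div_le_iff₀ hr]
        nlinarith [hm_nonneg R hR]
      exact le_trans this (le_max_left _ _)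
    · rcases lt_or_ge 0 (m r) with hmr | hmr
      · -- Buchdahl estimate applies
        set x : ℝ := Real.sqrt (1 - 2 * m r / r) with hxdef
        have htpos := ht_pos r hr
        have hxpos : 0 < x := Real.sqrt_pos.2 htpos
        have hx2 : x ^ 2 = 1 - 2 * m r / r := Real.sq_sqrt htpos.le
        have hbound := hpb r hr hmr
        have hζpos := Real.exp_pos (μ r)
        have hζle : Real.exp (μ r) ≤ Z := by
          rw [hZdef]
          exact hζmono (mem_Ioi.2 hr) (mem_Ioi.2 hr₁pos) hcase.le
        have h3x : 0 < 3 * x - 1 := by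
          nlinarith [hbound, mul_pos hxpos hcpos]
        have h4 : 2 * x * c ≤ Z * (3 * x - 1) :=
          le_trans hbound (mul_le_mul_of_nonneg_right hζle h3x.le)
        have hx13 : 1/3 < x := by linarith
        have hδx : 1/3 + δ ≤ x := by
          nlinarith [h4, hδZ, hZpos, hcpos, mul_nonneg (by linarith : (0:ℝ) ≤ x - 1/3) hcpos.le]
        have hfin : 2 * m r / r ≤ 1 - (1/3 + δ) ^ 2 := by
          have hsq : (1/3 + δ) ^ 2 ≤ x ^ 2 :=
            pow_le_pow_left₀ (by positivity) hδx 2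
          linarith [hx2, hsq]
        exact le_trans hfin (le_max_right _ _)
      · -- m r ≤ 0, hence m r = 0 and the value is ≤ 0
        have hmr0 : m r = 0 := le_antisymm hmr (hm_nonneg r hr)
        have : 2 * m r / r = 0 := by rw [hmr0]; simp
        rw [this]
        exact le_trans (by norm_num) (le_max_left (2/3 : ℝ) _)
  have hB : max (2/3 : ℝ) (1 - (1/3 + δ) ^ 2) < 8/9 := by
    apply max_lt
    · norm_num
    · nlinarith [hδpos]
  exact lt_of_le_of_lt (Real.sSup_le hub (le_trans (by norm_num) (le_max_left (2/3 : ℝ) _))) hB
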